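/- If C ⊆ F_q^{n×m} is an F_q-linear code (with m,n ≥ 2) whose dual C* has exactly one non-zero rank weight, then the minimum rank distance of C is at most 2. -/

import Mathlib

open Matrix

/-- The dual code with respect to the trace bilinear form `⟨X, Y⟩ = Tr(X Yᵀ)`. -/
def dualCode {F : Type*} [Field F] {n m : ℕ} (C : Set (Matrix (Fin n) (Fin m) F)) :
    Set (Matrix (Fin n) (Fin m) F) :=
  {Y | ∀ X ∈ C, Matrix.trace (X * Yᵀ) = 0}

namespace Stmt18

open Module Submodule Function

variable {F : Type*} [Field F]

section Pairing

variable {n m : ℕ}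

lemma trace_pairing (X Y : Matrix (Fin n) (Fin m) F) :
    Matrix.trace (X * Yᵀ) = ∑ i, ∑ j, X i j * Y i j := by
  simp [Matrix.trace, Matrix.mul_apply, Matrix.diag]

lemma pairing_symm (X Y : Matrix (Fin n) (Fin m) F) :
    Matrix.trace (X * Yᵀ) = Matrix.trace (Y * Xᵀ) := by
  rw [← Matrix.trace_transpose (X * Yᵀ), Matrix.transpose_mul, Matrix.transpose_transpose]

noncomputable def pairLin (n m : ℕ) :
    Matrix (Fin n) (Fin m) F →ₗ[F] Module.Dual F (Matrix (Fin n) (Fin m) F) where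
  toFun Y :=
    { toFun := fun X => Matrix.trace (X * Yᵀ)
      map_add' := fun a b => by simp [Matrix.add_mul]
      map_smul' := fun c a => by simp [Matrix.smul_mul] }
  map_add' a b := by
    ext X
    simp [Matrix.transpose_add, Matrix.mul_add]
  map_smul' c a := by
    ext X
    simp [Matrix.transpose_smul, Matrix.mul_smul]

@[simp] lemma pairLin_apply (Y X : Matrix (Fin n) (Fin m) F) :
    pairLin n m Y X = Matrix.trace (X * Yᵀ) := rfl

lemma trace_stdBasis (Y : Matrix (Fin n) (Fin m) F) (i : Fin n) (j : Fin m) :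
    Matrix.trace (Matrix.single i j (1:F) * Yᵀ) = Y i j := by
  rw [trace_pairing]
  rw [Finset.sum_eq_single i]
  · rw [Finset.sum_eq_single j]
    · simp [Matrix.single]
    · intro b _ hb; simp [Matrix.single, hb.symm]
    · simp
  · intro b _ hb
    apply Finset.sum_eq_zero
    intro c _
    simp [Matrix.single, hb.symm]
  · simp

lemma pairLin_bijective (n m : ℕ) : Bijective (pairLin (F := F) n m) := by
  have hinj : Injective (pairLin (F := F) n m) := by
    rw [injective_iff_map_eq_zero]
    intro Y hY
    ext i j
    have := congrFun (congrArg DFunLike.coe hY) (Matrix.single i j (1:F))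
    simpa [trace_stdBasis] using this
  refine ⟨hinj, ?_⟩
  rw [← LinearMap.range_eq_top]
  apply Submodule.eq_top_of_finrank_eq
  rw [LinearMap.finrank_range_of_inj hinj, Subspace.dual_finrank_eq]

end Pairing

section DualSub

variable {n m : ℕ}

noncomputable def dualSub (C : Submodule F (Matrix (Fin n) (Fin m) F)) :
    Submodule F (Matrix (Fin n) (Fin m) F) :=
  C.dualAnnihilator.comap (pairLin n m)

lemma mem_dualSub {C : Submodule F (Matrix (Fin n) (Fin m) F)}
    {Y : Matrix (Fin n) (Fin m) F} :
    Y ∈ dualSub C ↔ ∀ X ∈ C, Matrix.trace (X * Yᵀ) = 0 := by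
  simp [dualSub, Submodule.mem_dualAnnihilator]

lemma coe_dualSub (C : Submodule F (Matrix (Fin n) (Fin m) F)) :
    (dualSub C : Set (Matrix (Fin n) (Fin m) F)) = dualCode (C : Set _) := by
  ext Y
  simp [mem_dualSub, dualCode]

lemma finrank_dualSub (C : Submodule F (Matrix (Fin n) (Fin m) F)) :
    finrank F (dualSub C) + finrank F C = n * m := by
  classical
  let e : Matrix (Fin n) (Fin m) F ≃ₗ[F] Module.Dual F (Matrix (Fin n) (Fin m) F) :=
    LinearEquiv.ofBijective _ (pairLin_bijective (F := F) n m)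
  have hcomap : dualSub C = Submodule.comap (e : Matrix (Fin n) (Fin m) F →ₗ[F] Module.Dual F (Matrix (Fin n) (Fin m) F)) C.dualAnnihilator := rfl
  have h1 : finrank F (dualSub C) = finrank F C.dualAnnihilator := by
    rw [hcomap, Submodule.comap_equiv_eq_map_symm]
    exact LinearEquiv.finrank_map_eq e.symm C.dualAnnihilator
  rw [h1]
  have h2 : finrank F (Matrix (Fin n) (Fin m) F ⧸ C) = finrank F C.dualAnnihilator :=
    LinearEquiv.finrank_eq (Subspace.quotEquivAnnihilator C)
  have h3 := Submodule.finrank_quotient_add_finrank C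
  have h4 : finrank F (Matrix (Fin n) (Fin m) F) = n * m := by
    rw [Module.finrank_matrix]
    simp
  omega

lemma dualSub_dualSub (C : Submodule F (Matrix (Fin n) (Fin m) F)) :
    dualSub (dualSub C) = C := by
  have hle : C ≤ dualSub (dualSub C) := by
    intro X hX
    rw [mem_dualSub]
    intro Y hY
    rw [pairing_symm]
    exact (mem_dualSub.mp hY) X hX
  have h1 := finrank_dualSub C
  have h2 := finrank_dualSub (dualSub C)
  exact (Submodule.eq_of_le_of_finrank_eq hle (by omega)).symm

end DualSub

section Surj

variable {n m : ℕ}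

def colMap (n : ℕ) (v : Fin m → F) : Matrix (Fin n) (Fin m) F →ₗ[F] (Fin n → F) where
  toFun Y := Y.mulVec v
  map_add' A B := Matrix.add_mulVec A B v
  map_smul' c A := by simp [Matrix.smul_mulVec]

@[simp] lemma colMap_apply (v : Fin m → F) (Y : Matrix (Fin n) (Fin m) F) :
    colMap n v Y = Y.mulVec v := rfl

lemma trace_vecMulVec_pair (c : Fin n → F) (v : Fin m → F) (A : Matrix (Fin n) (Fin m) F) :
    Matrix.trace (Matrix.vecMulVec c v * Aᵀ) = ∑ i, A.mulVec v i * c i := by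
  rw [trace_pairing]
  refine Finset.sum_congr rfl fun i _ => ?_
  rw [Matrix.mulVec, dotProduct, Finset.sum_mul]
  refine Finset.sum_congr rfl fun j _ => ?_
  rw [Matrix.vecMulVec_apply]
  ring

lemma vecMulVec_mulVec (c : Fin n → F) (v : Fin m → F) (x : Fin m → F) :
    (Matrix.vecMulVec c v).mulVec x = (v ⬝ᵥ x) • c := by
  funext i
  rw [Matrix.mulVec, dotProduct]
  simp only [Matrix.vecMulVec_apply, Pi.smul_apply, dotProduct, smul_eq_mul,
    Finset.sum_mul, Finset.mul_sum]
  refine Finset.sum_congr rfl fun j _ => by ring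

lemma rank_le_two_of_span {X : Matrix (Fin n) (Fin m) F} (c c' : Fin n → F)
    (h : ∀ x : Fin m → F, X.mulVec x ∈ Submodule.span F ({c, c'} : Set (Fin n → F))) :
    X.rank ≤ 2 := by
  classical
  have hr : LinearMap.range X.mulVecLin ≤ Submodule.span F ({c, c'} : Set (Fin n → F)) := by
    rintro y ⟨x, rfl⟩
    exact h x
  have h1 : X.rank ≤ finrank F (Submodule.span F ({c, c'} : Set (Fin n → F))) :=
    Submodule.finrank_mono hr
  have h2 : ({c, c'} : Set (Fin n → F)) = (({c, c'} : Finset (Fin n → F)) : Set (Fin n → F)) := by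
    simp
  calc X.rank ≤ finrank F (Submodule.span F ({c, c'} : Set (Fin n → F))) := h1
    _ ≤ ({c, c'} : Finset (Fin n → F)).card := by
        rw [h2]
        exact finrank_span_finset_le_card _
    _ ≤ 2 := Finset.card_insert_le _ _ |>.trans (by simp)

end Surj

section SurjLemmas

variable {n m : ℕ}

lemma exists_dual_ne_of_ne_top {V : Type*} [AddCommGroup V] [Module F V]
    [FiniteDimensional F V] {W : Submodule F V} (hW : W ≠ ⊤) :
    ∃ f : Module.Dual F V, f ≠ 0 ∧ ∀ y ∈ W, f y = 0 := by
  have hann : W.dualAnnihilator ≠ ⊥ := by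
    intro hbot
    apply hW
    apply Submodule.eq_top_of_finrank_eq
    have h2 : finrank F (V ⧸ W) = finrank F W.dualAnnihilator :=
      LinearEquiv.finrank_eq (Subspace.quotEquivAnnihilator W)
    have h3 := Submodule.finrank_quotient_add_finrank W
    rw [hbot, finrank_bot] at h2
    omega
  obtain ⟨f, hf, hf0⟩ := Submodule.exists_mem_ne_zero_of_ne_bot hann
  exact ⟨f, hf0, fun y hy => Submodule.mem_dualAnnihilator f |>.mp hf y hy⟩

lemma dual_pi_repr (f : Module.Dual F (Fin n → F)) :
    ∀ y, f y = ∑ i, y i * f (Pi.single i 1) := by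
  intro y
  have h := LinearMap.pi_apply_eq_sum_univ f y
  have hs : ∀ i : Fin n, (Pi.single i (1:F) : Fin n → F) = fun j => if i = j then 1 else 0 := by
    intro i; funext j; simp [Pi.single_apply, eq_comm]
  simp only [smul_eq_mul] at h
  rw [h]
  exact Finset.sum_congr rfl fun i _ => by rw [hs]

lemma surj_single (C : Submodule F (Matrix (Fin n) (Fin m) F))
    (hgoal : ¬ ∃ X ∈ C, X ≠ 0 ∧ X.rank ≤ 2)
    (v : Fin m → F) (hv : v ≠ 0) :
    Surjective ((colMap n v).comp (dualSub C).subtype) := by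
  by_contra hns
  have hR : LinearMap.range ((colMap n v).comp (dualSub C).subtype) ≠ ⊤ := fun h => hns (LinearMap.range_eq_top.mp h)
  obtain ⟨f, hf0, hfW⟩ := exists_dual_ne_of_ne_top hR
  set c : Fin n → F := fun i => f (Pi.single i 1) with hc_def
  have hf : ∀ y, f y = ∑ i, y i * c i := dual_pi_repr f
  have hc : c ≠ 0 := by
    intro h0
    apply hf0
    refine LinearMap.ext fun y => ?_
    rw [hf y, h0]
    simp
  apply hgoal
  refine ⟨Matrix.vecMulVec c v, ?_, ?_, ?_⟩
  · rw [← dualSub_dualSub C]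
    rw [mem_dualSub]
    intro A hA
    rw [pairing_symm, trace_vecMulVec_pair, ← hf]
    exact hfW _ ⟨⟨A, hA⟩, rfl⟩
  · obtain ⟨i, hi⟩ := Function.ne_iff.mp hc
    obtain ⟨j, hj⟩ := Function.ne_iff.mp hv
    intro h0
    have : Matrix.vecMulVec c v i j = 0 := by rw [h0]; rfl
    rw [Matrix.vecMulVec_apply] at this
    exact (mul_ne_zero (by simpa using hi) (by simpa using hj)) this
  · apply rank_le_two_of_span c c
    intro x
    rw [vecMulVec_mulVec]
    exact Submodule.smul_mem _ _ (Submodule.subset_span (Set.mem_insert _ _))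

lemma surj_pair (hm : 2 ≤ m) (C : Submodule F (Matrix (Fin n) (Fin m) F))
    (hgoal : ¬ ∃ X ∈ C, X ≠ 0 ∧ X.rank ≤ 2) :
    2 * n ≤ finrank F (dualSub C) := by
  have hm0 : 0 < m := by omega
  set j0 : Fin m := ⟨0, by omega⟩
  set j1 : Fin m := ⟨1, by omega⟩
  have hj01 : j0 ≠ j1 := by
    intro h
    have := congrArg Fin.val h
    simp [j0, j1] at this
  set v0 : Fin m → F := Pi.single j0 1
  set v1 : Fin m → F := Pi.single j1 1
  set ψ : (dualSub C) →ₗ[F] (Fin n → F) × (Fin n → F) :=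
    LinearMap.prod ((colMap n v0).comp (dualSub C).subtype)
      ((colMap n v1).comp (dualSub C).subtype) with hψ
  have hsurj : Surjective ψ := by
    by_contra hns
    have hR : LinearMap.range ψ ≠ ⊤ := fun h => hns (LinearMap.range_eq_top.mp h)
    obtain ⟨f, hf0, hfW⟩ := exists_dual_ne_of_ne_top hR
    set c : Fin n → F := fun i => f (Pi.single i 1, 0) with hc_def
    set c' : Fin n → F := fun i => f (0, Pi.single i 1) with hc'_def
    have hsplit : ∀ y y' : Fin n → F, f (y, y') = (∑ i, y i * c i) + ∑ i, y' i * c' i := by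
      intro y y'
      have h1 : (y, y') = (y, (0 : Fin n → F)) + ((0 : Fin n → F), y') := by simp
      rw [h1, map_add]
      congr 1
      · have := dual_pi_repr (f.comp (LinearMap.inl F (Fin n → F) (Fin n → F)))
        simpa using this y
      · have := dual_pi_repr (f.comp (LinearMap.inr F (Fin n → F) (Fin n → F)))
        simpa using this y'
    have hcc' : c ≠ 0 ∨ c' ≠ 0 := by
      by_contra h
      push_neg at h
      apply hf0
      refine LinearMap.ext fun p => ?_
      have hp := hsplit p.1 p.2
      rw [h.1, h.2] at hp
      simpa using hp
    apply hgoal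
    set X : Matrix (Fin n) (Fin m) F := Matrix.vecMulVec c v0 + Matrix.vecMulVec c' v1 with hX
    have hXentry : ∀ i j, X i j = c i * v0 j + c' i * v1 j := by
      intro i j
      rw [hX]
      simp [Matrix.vecMulVec_apply]
    refine ⟨X, ?_, ?_, ?_⟩
    · rw [← dualSub_dualSub C, mem_dualSub]
      intro A hA
      rw [pairing_symm, hX, Matrix.add_mul, Matrix.trace_add,
        trace_vecMulVec_pair, trace_vecMulVec_pair]
      have := hfW _ ⟨⟨A, hA⟩, rfl⟩
      rw [hψ] at this
      simp only [LinearMap.prod_apply, Pi.prod, LinearMap.comp_apply,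
        Submodule.subtype_apply, colMap_apply] at this
      rw [← hsplit (A.mulVec v0) (A.mulVec v1)]
      exact this
    · intro h0
      have hc0 : c = 0 := by
        ext i
        have := hXentry i j0
        rw [h0] at this
        simpa [v0, v1, Pi.single_apply, hj01] using this.symm
      have hc'0 : c' = 0 := by
        ext i
        have := hXentry i j1
        rw [h0] at this
        simpa [v0, v1, Pi.single_apply, hj01, Ne.symm hj01] using this.symm
      rcases hcc' with h | h
      · exact h hc0
      · exact h hc'0
    · apply rank_le_two_of_span c c'
      intro x
      rw [hX, Matrix.add_mulVec, vecMulVec_mulVec, vecMulVec_mulVec]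
      exact Submodule.add_mem _
        (Submodule.smul_mem _ _ (Submodule.subset_span (Set.mem_insert _ _)))
        (Submodule.smul_mem _ _ (Submodule.subset_span
          (Set.mem_insert_of_mem _ (Set.mem_singleton _))))
  have := LinearMap.finrank_range_add_finrank_ker ψ
  rw [LinearMap.range_eq_top.mpr hsurj, finrank_top, Module.finrank_prod,
    Module.finrank_fin_fun] at this
  omega

end SurjLemmas

section Counting

variable [Fintype F] {n m : ℕ}

lemma count_lemma (hm1 : 0 < m) (D : Submodule F (Matrix (Fin n) (Fin m) F)) (w : ℕ)
    (hw : ∀ Y ∈ D, Y ≠ (0 : Matrix (Fin n) (Fin m) F) → Y.rank = w)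
    (hsurj : ∀ v : Fin m → F, v ≠ 0 → Surjective ((colMap n v).comp D.subtype)) :
    n ≤ finrank F D ∧
      (Fintype.card F ^ finrank F D - 1) * (Fintype.card F ^ (m - w) - 1)
          + (Fintype.card F ^ m - 1)
        = (Fintype.card F ^ m - 1) * Fintype.card F ^ (finrank F D - n) := by
  classical
  set q := Fintype.card F with hq
  set k := finrank F D with hk
  haveI : Fintype D := Fintype.ofFinite D
  have hcardD : Fintype.card D = q ^ k := card_eq_pow_finrank
  have hker : ∀ Y : Matrix (Fin n) (Fin m) F,
      (Finset.univ.filter fun v : Fin m → F => Y.mulVec v = 0).card = q ^ (m - Y.rank) := by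
    intro Y
    have e1 : (Finset.univ.filter fun v : Fin m → F => Y.mulVec v = 0).card
        = Fintype.card {v : Fin m → F // Y.mulVec v = 0} := (Fintype.card_subtype _).symm
    have e2 : Fintype.card {v : Fin m → F // Y.mulVec v = 0}
        = Fintype.card (LinearMap.ker Y.mulVecLin) := by
      apply Fintype.card_congr
      apply Equiv.subtypeEquivRight
      intro v
      simp [LinearMap.mem_ker]
    have e3 : Fintype.card (LinearMap.ker Y.mulVecLin)
        = q ^ finrank F (LinearMap.ker Y.mulVecLin) := card_eq_pow_finrank
    have e4 := LinearMap.finrank_range_add_finrank_ker Y.mulVecLin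
    rw [Module.finrank_fin_fun] at e4
    have e5 : Y.rank = finrank F (LinearMap.range Y.mulVecLin) := rfl
    have e6 : finrank F (LinearMap.ker Y.mulVecLin) = m - Y.rank := by omega
    rw [e1, e2, e3, e6]
  have hkerD : ∀ v : Fin m → F, v ≠ 0 →
      n ≤ k ∧ (Finset.univ.filter fun Y : D =>
        (Y : Matrix (Fin n) (Fin m) F).mulVec v = 0).card = q ^ (k - n) := by
    intro v hv
    set φ := (colMap n v).comp D.subtype with hφ
    have e4 := LinearMap.finrank_range_add_finrank_ker φ
    rw [LinearMap.range_eq_top.mpr (hsurj v hv), finrank_top, Module.finrank_fin_fun] at e4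
    refine ⟨by omega, ?_⟩
    have e1 : (Finset.univ.filter fun Y : D =>
        (Y : Matrix (Fin n) (Fin m) F).mulVec v = 0).card
        = Fintype.card {Y : D // (Y : Matrix (Fin n) (Fin m) F).mulVec v = 0} :=
      (Fintype.card_subtype _).symm
    have e2 : Fintype.card {Y : D // (Y : Matrix (Fin n) (Fin m) F).mulVec v = 0}
        = Fintype.card (LinearMap.ker φ) := by
      apply Fintype.card_congr
      apply Equiv.subtypeEquivRight
      intro Y
      simp [LinearMap.mem_ker, hφ]
    have e3 : Fintype.card (LinearMap.ker φ)
        = q ^ finrank F (LinearMap.ker φ) := by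
      convert Module.card_eq_pow_finrank (K := F) (V := LinearMap.ker φ)
    have e6 : finrank F (LinearMap.ker φ) = k - n := by omega
    rw [e1, e2, e3, e6]
  have hv0 : (Pi.single (⟨0, hm1⟩ : Fin m) (1:F) : Fin m → F) ≠ 0 := by
    intro h
    have := congrFun h (⟨0, hm1⟩ : Fin m)
    simp at this
  have hnk : n ≤ k := (hkerD _ hv0).1
  refine ⟨hnk, ?_⟩
  have hswap : ∑ Y : D, ∑ v : Fin m → F,
        (if (Y : Matrix (Fin n) (Fin m) F).mulVec v = 0 ∧ v ≠ 0 then 1 else 0)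
      = ∑ v : Fin m → F, ∑ Y : D,
        (if (Y : Matrix (Fin n) (Fin m) F).mulVec v = 0 ∧ v ≠ 0 then 1 else 0) :=
    Finset.sum_comm
  have hinner : ∀ Y : D, (∑ v : Fin m → F,
      (if (Y : Matrix (Fin n) (Fin m) F).mulVec v = 0 ∧ v ≠ 0 then (1:ℕ) else 0))
      = q ^ (m - (Y : Matrix (Fin n) (Fin m) F).rank) - 1 := by
    intro Y
    have hb : (∑ v : Fin m → F,
        (if (Y : Matrix (Fin n) (Fin m) F).mulVec v = 0 ∧ v ≠ 0 then (1:ℕ) else 0))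
        = (Finset.univ.filter fun v : Fin m → F =>
            (Y : Matrix (Fin n) (Fin m) F).mulVec v = 0 ∧ v ≠ 0).card := by
      simp only [Finset.sum_boole, Nat.cast_id]
    have hfe : (Finset.univ.filter fun v : Fin m → F =>
          (Y : Matrix (Fin n) (Fin m) F).mulVec v = 0 ∧ v ≠ 0)
        = (Finset.univ.filter fun v : Fin m → F =>
          (Y : Matrix (Fin n) (Fin m) F).mulVec v = 0).erase 0 := by
      ext v
      simp only [Finset.mem_filter, Finset.mem_erase, Finset.mem_univ, true_and]
      tauto
    rw [hb, hfe, Finset.card_erase_of_mem (by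
      simp only [Finset.mem_filter, Finset.mem_univ, true_and]
      exact Matrix.mulVec_zero _), hker]
  have hLHS : (∑ Y : D, ∑ v : Fin m → F,
        (if (Y : Matrix (Fin n) (Fin m) F).mulVec v = 0 ∧ v ≠ 0 then 1 else 0))
      = (q ^ m - 1) + (q ^ k - 1) * (q ^ (m - w) - 1) := by
    rw [Finset.sum_congr rfl fun Y _ => hinner Y]
    rw [← Finset.add_sum_erase Finset.univ _ (Finset.mem_univ (0 : D))]
    congr 1
    · norm_num
    · rw [Finset.sum_congr rfl fun Y hY => ?_, Finset.sum_const,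
        Finset.card_erase_of_mem (Finset.mem_univ _), Finset.card_univ, hcardD,
        smul_eq_mul]
      have hY0 : (Y : Matrix (Fin n) (Fin m) F) ≠ 0 := by
        have := (Finset.mem_erase.mp hY).1
        simpa using this
      rw [hw _ Y.2 hY0]
  have hRHS : (∑ v : Fin m → F, ∑ Y : D,
        (if (Y : Matrix (Fin n) (Fin m) F).mulVec v = 0 ∧ v ≠ 0 then 1 else 0))
      = (q ^ m - 1) * q ^ (k - n) := by
    rw [← Finset.add_sum_erase Finset.univ _ (Finset.mem_univ (0 : Fin m → F))]
    have hzero : (∑ Y : D, (if (Y : Matrix (Fin n) (Fin m) F).mulVec (0 : Fin m → F) = 0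
        ∧ (0 : Fin m → F) ≠ 0 then (1:ℕ) else 0)) = 0 := by
      apply Finset.sum_eq_zero
      intro Y _
      simp
    rw [hzero, zero_add]
    rw [Finset.sum_congr rfl fun v hv => ?_, Finset.sum_const,
      Finset.card_erase_of_mem (Finset.mem_univ _), Finset.card_univ, smul_eq_mul]
    · congr 1
      rw [Fintype.card_fun, Fintype.card_fin]
    · have hv0' : v ≠ 0 := (Finset.mem_erase.mp hv).1
      have hb : (∑ Y : D, (if (Y : Matrix (Fin n) (Fin m) F).mulVec v = 0 ∧ v ≠ 0
          then (1:ℕ) else 0))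
          = (Finset.univ.filter fun Y : D =>
              (Y : Matrix (Fin n) (Fin m) F).mulVec v = 0).card := by
        simp only [hv0', ne_eq, not_false_eq_true, and_true, Finset.sum_boole, Nat.cast_id]
      rw [hb, (hkerD v hv0').2]
  calc (q ^ k - 1) * (q ^ (m - w) - 1) + (q ^ m - 1)
      = (q ^ m - 1) + (q ^ k - 1) * (q ^ (m - w) - 1) := by ring
    _ = (q ^ m - 1) * q ^ (k - n) := by rw [← hLHS, hswap, hRHS]

end Counting

section Arith

lemma arith {q n m w k : ℕ} (hq : 2 ≤ q) (hn : 2 ≤ n) (hm : 2 ≤ m) (hw : 1 ≤ w)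
    (hkn : 2 * n ≤ k) (hkm : 2 * m ≤ k)
    (e1 : (q ^ k - 1) * (q ^ (m - w) - 1) + (q ^ m - 1) = (q ^ m - 1) * q ^ (k - n))
    (e2 : (q ^ k - 1) * (q ^ (n - w) - 1) + (q ^ n - 1) = (q ^ n - 1) * q ^ (k - m)) :
    False := by
  have hq1 : 1 ≤ q := by omega
  have hp1 : ∀ a : ℕ, 1 ≤ q ^ a := fun a => Nat.one_le_pow _ _ (by omega)
  have hp2 : ∀ a : ℕ, 1 ≤ a → 2 ≤ q ^ a := by
    intro a ha
    calc 2 ≤ q := hq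
      _ = q ^ 1 := (pow_one q).symm
      _ ≤ q ^ a := Nat.pow_le_pow_right hq1 ha
  have hp4 : ∀ a : ℕ, 2 ≤ a → 4 ≤ q ^ a := by
    intro a ha
    calc 4 = 2 ^ 2 := rfl
      _ ≤ q ^ 2 := Nat.pow_le_pow_left hq 2
      _ ≤ q ^ a := Nat.pow_le_pow_right hq1 ha
  have hwm : w < m := by
    by_contra h
    push_neg at h
    have h0 : m - w = 0 := by omega
    rw [h0] at e1
    simp only [pow_zero, Nat.sub_self, Nat.mul_zero, Nat.zero_add] at e1
    have h4 : 4 ≤ q ^ m := hp4 m hm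
    have h5 : 4 ≤ q ^ (k - n) := hp4 _ (by omega)
    zify [hp1 m] at e1
    zify at h4 h5
    nlinarith [e1, h4, h5]
  have hwn : w < n := by
    by_contra h
    push_neg at h
    have h0 : n - w = 0 := by omega
    rw [h0] at e2
    simp only [pow_zero, Nat.sub_self, Nat.mul_zero, Nat.zero_add] at e2
    have h4 : 4 ≤ q ^ n := hp4 n hn
    have h5 : 4 ≤ q ^ (k - m) := hp4 _ (by omega)
    zify [hp1 n] at e2
    zify at h4 h5
    nlinarith [e2, h4, h5]
  have hA1 : 1 ≤ m - w := by omega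
  have hBn : n ≤ k - n := by omega
  have hexp : m + (k - n) + 1 ≤ k + (m - w) := by omega
  have hkA1 : 1 ≤ k + (m - w) := by omega
  have f1 : q ^ k * q ^ (m - w) = q * q ^ (k + (m - w) - 1) := by
    rw [← pow_add, ← pow_succ']
    congr 1
    omega
  have f2 : q ^ m * q ^ (k - n) ≤ q ^ (k + (m - w) - 1) := by
    rw [← pow_add]
    exact Nat.pow_le_pow_right hq1 (by omega)
  have f3 : 4 ≤ q ^ m := hp4 m hm
  have f4 : 4 ≤ q ^ (k - n) := hp4 _ (by omega)
  have f5 : 2 ≤ q ^ k := hp2 k (by omega)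
  have f6 : 2 ≤ q ^ (m - w) := hp2 _ hA1
  have f7 : 1 ≤ q ^ (k + (m - w) - 1) := hp1 _
  -- move to integers
  zify [hp1 k, hp1 (m - w), hp1 m] at e1
  zify at f1 f2 f3 f4 f5 f6 f7 hq
  set x : ℤ := (q : ℤ) ^ k
  set y : ℤ := (q : ℤ) ^ (m - w)
  set X : ℤ := (q : ℤ) ^ m
  set Y : ℤ := (q : ℤ) ^ (k - n)
  set P : ℤ := (q : ℤ) ^ (k + (m - w) - 1)
  have g1 : (x - 2) * (y - 2) ≥ 0 := mul_nonneg (by linarith) (by linarith)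
  have g2 : ((q : ℤ) - 2) * P ≥ 0 := mul_nonneg (by linarith) (by linarith)
  nlinarith [e1, f1, f2, g1, g2, f3, f4]

end Arith

section Transpose

variable {n m : ℕ}

lemma trace_transpose_pair (X : Matrix (Fin n) (Fin m) F) (Y : Matrix (Fin m) (Fin n) F) :
    Matrix.trace (Xᵀ * Yᵀ) = Matrix.trace (X * Y) := by
  rw [← Matrix.transpose_mul, Matrix.trace_transpose, Matrix.trace_mul_comm]

lemma mem_map_transpose {C : Submodule F (Matrix (Fin n) (Fin m) F)}
    {X : Matrix (Fin m) (Fin n) F} :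
    X ∈ C.map (Matrix.transposeLinearEquiv (Fin n) (Fin m) F F).toLinearMap ↔ Xᵀ ∈ C := by
  rw [Submodule.mem_map]
  constructor
  · rintro ⟨Z, hZ, rfl⟩
    simpa using hZ
  · intro h
    exact ⟨Xᵀ, h, by simp⟩

lemma dualSub_map_transpose {C : Submodule F (Matrix (Fin n) (Fin m) F)}
    {Y : Matrix (Fin m) (Fin n) F}
    (hY : Y ∈ dualSub (C.map (Matrix.transposeLinearEquiv (Fin n) (Fin m) F F).toLinearMap)) :
    Yᵀ ∈ dualSub C := by
  rw [mem_dualSub] at hY ⊢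
  intro X hX
  have h1 := hY Xᵀ (mem_map_transpose.mpr (by simpa using hX))
  rw [trace_transpose_pair] at h1
  rw [Matrix.transpose_transpose]
  exact h1

end Transpose

section Main

variable [Fintype F] {n m : ℕ}

theorem main_thm (hn : 2 ≤ n) (hm : 2 ≤ m)
    (C : Submodule F (Matrix (Fin n) (Fin m) F))
    (w : ℕ) (hw : 1 ≤ w)
    (hall : ∀ Y ∈ dualCode (C : Set (Matrix (Fin n) (Fin m) F)), Y ≠ 0 → Y.rank = w) :
    ∃ X ∈ C, X ≠ 0 ∧ X.rank ≤ 2 := by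
  by_contra hgoal
  have hq : 2 ≤ Fintype.card F := Fintype.one_lt_card
  -- the dual code as a submodule
  have hall' : ∀ Y ∈ dualSub C, Y ≠ (0 : Matrix (Fin n) (Fin m) F) → Y.rank = w := by
    intro Y hY hY0
    exact hall Y (by rw [← coe_dualSub]; exact hY) hY0
  obtain ⟨hnk, e1⟩ := count_lemma (by omega) (dualSub C) w hall'
    (fun v hv => surj_single C hgoal v hv)
  have h2n : 2 * n ≤ finrank F (dualSub C) := surj_pair hm C hgoal
  -- transposed code
  set tC := C.map (Matrix.transposeLinearEquiv (Fin n) (Fin m) F F).toLinearMap with htC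
  have hgoalT : ¬ ∃ X ∈ tC, X ≠ 0 ∧ X.rank ≤ 2 := by
    rintro ⟨X, hX, hX0, hXr⟩
    exact hgoal ⟨Xᵀ, mem_map_transpose.mp hX,
      fun h => hX0 (by simpa using congrArg Matrix.transpose h),
      by rw [Matrix.rank_transpose]; exact hXr⟩
  have hallT : ∀ Y ∈ dualSub tC, Y ≠ (0 : Matrix (Fin m) (Fin n) F) → Y.rank = w := by
    intro Y hY hY0
    have h1 : Yᵀ ∈ dualSub C := dualSub_map_transpose hY
    have h2 : Yᵀ ≠ 0 := fun h => hY0 (Matrix.transpose_eq_zero.mp h)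
    rw [← Matrix.rank_transpose]
    exact hall' Yᵀ h1 h2
  obtain ⟨hmk, e2⟩ := count_lemma (by omega) (dualSub tC) w hallT
    (fun v hv => surj_single tC hgoalT v hv)
  have h2m : 2 * m ≤ finrank F (dualSub tC) := surj_pair hn tC hgoalT
  -- the two dual codes have the same dimension
  have a1 := finrank_dualSub C
  have a2 := finrank_dualSub tC
  have a3 : finrank F tC = finrank F C := LinearEquiv.finrank_map_eq _ _
  have hk'k : finrank F (dualSub tC) = finrank F (dualSub C) := by
    rw [Nat.mul_comm m n] at a2
    omega
  rw [hk'k] at e2 h2m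
  exact arith hq hn hm hw h2n h2m e1 e2

end Main

end Stmt18

theorem stmt_18 {F : Type*} [Field F] [Fintype F] {n m : ℕ}
    (hn : 2 ≤ n) (hm : 2 ≤ m)
    (C : Submodule F (Matrix (Fin n) (Fin m) F))
    (w : ℕ) (hw : 1 ≤ w)
    (hex : ∃ Y ∈ dualCode (C : Set (Matrix (Fin n) (Fin m) F)), Y ≠ 0 ∧ Y.rank = w)
    (hall : ∀ Y ∈ dualCode (C : Set (Matrix (Fin n) (Fin m) F)), Y ≠ 0 → Y.rank = w) :
    ∃ X ∈ C, X ≠ 0 ∧ X.rank ≤ 2 :=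
  Stmt18.main_thm hn hm C w hw hall
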